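/- Let A = (A₁ A₂) ∈ ℝ^{m×n} with A₁ ∈ ℝ^{m×k}, rank(A₁) = k, and r ≥ k. Then the matrix Ã₂ = P_{A₁}(A₂) + H_{r−k}(P⊥_{A₁}(A₂)) minimizes ‖A₂ − X₂‖_F over all X₂ such that rank(A₁ X₂) ≤ r, where P_{A₁} and P⊥_{A₁} are the orthogonal projections onto the column space of A₁ and its orthogonal complement, and H_{r−k} denotes rank-(r−k) truncated SVD. -/

import Mathlib

open Matrix Filter Topology

noncomputable def frobSq {α β : Type*} [Fintype α] [Fintype β] (A : Matrix α β ℝ) : ℝ :=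
  ∑ i, ∑ j, (A i j) ^ 2

noncomputable def frob {α β : Type*} [Fintype α] [Fintype β] (A : Matrix α β ℝ) : ℝ :=
  Real.sqrt (frobSq A)

lemma frobSq_nonneg {α β : Type*} [Fintype α] [Fintype β] (A : Matrix α β ℝ) :
    0 ≤ frobSq A :=
  Finset.sum_nonneg fun _ _ => Finset.sum_nonneg fun _ _ => sq_nonneg _

lemma frobSq_eq_trace {α β : Type*} [Fintype α] [Fintype β] (A : Matrix α β ℝ) :
    frobSq A = Matrix.trace (Aᵀ * A) := by
  simp only [frobSq, Matrix.trace, Matrix.diag, Matrix.mul_apply, Matrix.transpose_apply, sq]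
  exact Finset.sum_comm

lemma frob_le_frob {α β : Type*} [Fintype α] [Fintype β] {A B : Matrix α β ℝ}
    (h : frobSq A ≤ frobSq B) : frob A ≤ frob B :=
  Real.sqrt_le_sqrt h

/-- Pythagoras: projecting with `1 - P` does not increase the Frobenius norm. -/
lemma frobSq_proj_le {m n : ℕ} (P : Matrix (Fin m) (Fin m) ℝ)
    (hPT : Pᵀ = P) (hPP : P * P = P) (M : Matrix (Fin m) (Fin n) ℝ) :
    frobSq ((1 - P) * M) ≤ frobSq M := by
  have hQT : (1 - P)ᵀ = 1 - P := by rw [transpose_sub, transpose_one, hPT]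
  have hQQ : (1 - P) * (1 - P) = 1 - P := by
    rw [sub_mul, one_mul, mul_sub, mul_one, hPP, sub_self, sub_zero]
  have e1 : (P * M)ᵀ * (P * M) = Mᵀ * (P * M) := by
    rw [transpose_mul, hPT, Matrix.mul_assoc, ← Matrix.mul_assoc P P M, hPP]
  have e2 : ((1 - P) * M)ᵀ * ((1 - P) * M) = Mᵀ * ((1 - P) * M) := by
    rw [transpose_mul, hQT, Matrix.mul_assoc, ← Matrix.mul_assoc (1 - P) (1 - P) M, hQQ]
  have key : frobSq M = frobSq (P * M) + frobSq ((1 - P) * M) := by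
    rw [frobSq_eq_trace, frobSq_eq_trace, frobSq_eq_trace, e1, e2, ← Matrix.trace_add,
      ← Matrix.mul_add]
    congr 2
    rw [Matrix.sub_mul, Matrix.one_mul, add_sub_cancel]
  have := frobSq_nonneg (P * M)
  linarith

theorem stmt2 {m k nk r : ℕ} (hkr : k ≤ r)
    (A₁ : Matrix (Fin m) (Fin k) ℝ) (A₂ : Matrix (Fin m) (Fin nk) ℝ)
    (hrank : A₁.rank = k)
    (P : Matrix (Fin m) (Fin m) ℝ) (hP : P = A₁ * (A₁ᵀ * A₁)⁻¹ * A₁ᵀ)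
    (H : Matrix (Fin m) (Fin nk) ℝ)
    (hHrank : H.rank ≤ r - k)
    (hHbest : ∀ Y : Matrix (Fin m) (Fin nk) ℝ, Y.rank ≤ r - k →
      frob ((1 - P) * A₂ - H) ≤ frob ((1 - P) * A₂ - Y)) :
    ∀ X₂ : Matrix (Fin m) (Fin nk) ℝ,
      (Matrix.fromCols A₁ X₂).rank ≤ r →
      frob (A₂ - (P * A₂ + H)) ≤ frob (A₂ - X₂) := by
  intro X₂ hX
  -- A₁ᵀ * A₁ is invertible
  have hkerA : LinearMap.ker A₁.mulVecLin = ⊥ := by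
    have h1 := A₁.mulVecLin.finrank_range_add_finrank_ker
    have h2 : Module.finrank ℝ (LinearMap.range A₁.mulVecLin) = k := hrank
    have h3 : Module.finrank ℝ (Fin k → ℝ) = k := by simp
    rw [h2, h3] at h1
    have : Module.finrank ℝ (LinearMap.ker A₁.mulVecLin) = 0 := by omega
    exact Submodule.finrank_eq_zero.mp this
  have hU : IsUnit (A₁ᵀ * A₁) := by
    rw [← Matrix.mulVec_injective_iff_isUnit]
    have : LinearMap.ker (A₁ᵀ * A₁).mulVecLin = ⊥ := by
      rw [Matrix.ker_mulVecLin_transpose_mul_self, hkerA]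
    have hinj := LinearMap.ker_eq_bot.mp this
    exact hinj
  have hdet : IsUnit (A₁ᵀ * A₁).det := (Matrix.isUnit_iff_isUnit_det _).mp hU
  have hinv : (A₁ᵀ * A₁)⁻¹ * (A₁ᵀ * A₁) = 1 := Matrix.nonsing_inv_mul _ hdet
  -- basic projection facts
  have hPA1 : P * A₁ = A₁ := by
    rw [hP, Matrix.mul_assoc, Matrix.mul_assoc, hinv, Matrix.mul_one]
  have hPT : Pᵀ = P := by
    rw [hP, transpose_mul, transpose_mul, transpose_transpose, Matrix.transpose_nonsing_inv,
      transpose_mul, transpose_transpose, Matrix.mul_assoc]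
  have hPP : P * P = P := by
    nth_rewrite 2 [hP]
    rw [← Matrix.mul_assoc, ← Matrix.mul_assoc, hPA1, ← hP]
  have hQA1 : (1 - P) * A₁ = 0 := by rw [Matrix.sub_mul, Matrix.one_mul, hPA1, sub_self]
  have hQQ : (1 - P) * (1 - P) = 1 - P := by
    rw [sub_mul, one_mul, mul_sub, mul_one, hPP, sub_self, sub_zero]
  -- rank of (1 - P) * X₂ is at most r - k
  set Q : Matrix (Fin m) (Fin m) ℝ := 1 - P with hQ
  have hrangeA : LinearMap.range A₁.mulVecLin ≤
      LinearMap.range (Matrix.fromCols A₁ X₂).mulVecLin := by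
    rintro x ⟨v, rfl⟩
    exact ⟨Sum.elim v 0, by simp [Matrix.mulVecLin_apply]⟩
  have hrangeQX : LinearMap.range (Q * X₂).mulVecLin ≤
      LinearMap.range (Matrix.fromCols A₁ X₂).mulVecLin := by
    rintro x ⟨v, rfl⟩
    have hx : (Q * X₂).mulVecLin v = X₂ *ᵥ v - P *ᵥ (X₂ *ᵥ v) := by
      rw [Matrix.mulVecLin_apply, hQ, Matrix.sub_mul, Matrix.one_mul, Matrix.sub_mulVec,
        Matrix.mulVec_mulVec]
    have hXmem : X₂ *ᵥ v ∈ LinearMap.range (Matrix.fromCols A₁ X₂).mulVecLin :=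
      ⟨Sum.elim 0 v, by simp [Matrix.mulVecLin_apply]⟩
    have hPmem : P *ᵥ (X₂ *ᵥ v) ∈ LinearMap.range (Matrix.fromCols A₁ X₂).mulVecLin := by
      apply hrangeA
      refine ⟨(A₁ᵀ * A₁)⁻¹ *ᵥ (A₁ᵀ *ᵥ (X₂ *ᵥ v)), ?_⟩
      simp [Matrix.mulVecLin_apply, hP, Matrix.mulVec_mulVec, Matrix.mul_assoc]
    rw [hx]
    exact Submodule.sub_mem _ hXmem hPmem
  have hdisj : LinearMap.range A₁.mulVecLin ⊓ LinearMap.range (Q * X₂).mulVecLin = ⊥ := by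
    rw [eq_bot_iff]
    rintro x ⟨⟨u, hu⟩, ⟨w, hw⟩⟩
    simp only [Matrix.mulVecLin_apply] at hu hw
    have h1 : Q *ᵥ x = 0 := by
      rw [← hu, Matrix.mulVec_mulVec, hQA1, Matrix.zero_mulVec]
    have h2 : Q *ᵥ x = x := by
      rw [← hw, Matrix.mulVec_mulVec, ← Matrix.mul_assoc, hQQ]
    have : x = 0 := by rw [← h2, h1]
    simp [this]
  have hsup : LinearMap.range A₁.mulVecLin ⊔ LinearMap.range (Q * X₂).mulVecLin ≤
      LinearMap.range (Matrix.fromCols A₁ X₂).mulVecLin :=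
    sup_le hrangeA hrangeQX
  have hdim := Submodule.finrank_sup_add_finrank_inf_eq
      (LinearMap.range A₁.mulVecLin) (LinearMap.range (Q * X₂).mulVecLin)
  rw [hdisj] at hdim
  have hsupfin : Module.finrank ℝ
      ↥(LinearMap.range A₁.mulVecLin ⊔ LinearMap.range (Q * X₂).mulVecLin) ≤ r :=
    le_trans (Submodule.finrank_mono hsup) hX
  have hbot : Module.finrank ℝ (⊥ : Submodule ℝ (Fin m → ℝ)) = 0 := finrank_bot ℝ _
  have hA1r : Module.finrank ℝ ↥(LinearMap.range A₁.mulVecLin) = k := hrank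
  have hQXr : (Q * X₂).rank = Module.finrank ℝ ↥(LinearMap.range (Q * X₂).mulVecLin) := rfl
  have hrankQX : (Q * X₂).rank ≤ r - k := by omega
  -- assemble
  have hgoal : A₂ - (P * A₂ + H) = Q * A₂ - H := by
    rw [hQ, Matrix.sub_mul, Matrix.one_mul]
    abel
  rw [hgoal]
  calc frob (Q * A₂ - H) ≤ frob (Q * A₂ - Q * X₂) := hHbest (Q * X₂) hrankQX
    _ = frob (Q * (A₂ - X₂)) := by rw [Matrix.mul_sub]
    _ ≤ frob (A₂ - X₂) := frob_le_frob (frobSq_proj_le P hPT hPP _)
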